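/- Let q be an even prime power, s even with s ≥ 4, m = 2s, and n = (q^{2s}-1)/(q+1). Let i be an integer with ⌈q/2⌉·q^{s-1} ≤ i < (q^{s+1}+1)/(q+1) and q ∤ i. Then i is NOT a q-cyclotomic coset leader modulo n if and only if i = ((q-t)q^s + (t+1))/(q+1) for some integer t with 1 ≤ t ≤ (q-2)/2. -/

import Mathlib

/-- `t` is a q-cyclotomic coset leader modulo `n`. -/
def IsCosetLeader (q n t : ℕ) : Prop :=
  t < n ∧ ∀ j : ℕ, t ≤ t * q ^ j % n

private lemma modN_eq {N x k r : ℕ} (hx : x = r + k * N) (hr : r < N) : x % N = r := by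
  subst hx
  rw [Nat.add_mul_mod_self_right, Nat.mod_eq_of_lt hr]

/-- for q an even prime power and s even, s ≥ 4, an integer i with
⌈q/2⌉q^{s-1} ≤ i < (q^{s+1}+1)/(q+1) and q ∤ i fails to be a coset leader
modulo n = (q^{2s}-1)/(q+1) iff i(q+1) = (q-t)q^s + (t+1) for some
1 ≤ t ≤ (q-2)/2. -/
theorem stmt_8 (q s i : ℕ) (hq : IsPrimePow q) (hq2 : 2 ∣ q)
    (hs : 2 ∣ s) (hs4 : 4 ≤ s)
    (hil : q / 2 * q ^ (s - 1) ≤ i) (hiu : i < (q ^ (s + 1) + 1) / (q + 1))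
    (hqi : ¬ q ∣ i) :
    ¬ IsCosetLeader q ((q ^ (2 * s) - 1) / (q + 1)) i ↔
      ∃ t : ℕ, 1 ≤ t ∧ t ≤ (q - 2) / 2 ∧ i * (q + 1) = (q - t) * q ^ s + (t + 1) := by
  clear hil
  have hq1 : 2 ≤ q := hq.two_le
  obtain ⟨u, hu⟩ := hq2
  have hu1 : 1 ≤ u := by omega
  set N := q ^ (2 * s) - 1 with hNdef
  have hqs1 : 1 ≤ q ^ s := Nat.one_le_pow _ _ (by omega)
  have hN1 : N + 1 = q ^ (2 * s) := by
    have : 1 ≤ q ^ (2 * s) := Nat.one_le_pow _ _ (by omega)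
    omega
  have h2s : q ^ (2 * s) = q ^ s * q ^ s := by rw [two_mul, pow_add]
  have hss : q ^ s * q ^ s = N + 1 := by rw [← h2s, ← hN1]
  have hqq : q * q ≤ q ^ s := by
    calc q * q = q ^ 2 := (sq q).symm
    _ ≤ q ^ s := Nat.pow_le_pow_right (by omega) (by omega)
  have hqlt : q < q ^ s := by nlinarith
  -- divisibility facts
  have h21 : (q + 1) ∣ q ^ 2 - 1 := by
    obtain ⟨p, rfl⟩ : ∃ p, q = 2 + p := ⟨q - 2, by omega⟩
    refine ⟨p + 1, ?_⟩
    have h1 : (2 + p) ^ 2 = p * p + 4 * p + 4 := by ring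
    have h2 : (2 + p + 1) * (p + 1) = p * p + 4 * p + 3 := by ring
    omega
  have hdvd_s : (q + 1) ∣ q ^ s - 1 := by
    obtain ⟨k, hk⟩ := hs
    have := Nat.sub_dvd_pow_sub_pow (q ^ 2) 1 k
    rw [one_pow, ← pow_mul, ← hk] at this
    exact h21.trans this
  have hdvdN : (q + 1) ∣ N := by
    have := Nat.sub_dvd_pow_sub_pow (q ^ 2) 1 s
    rw [one_pow, ← pow_mul, ← hNdef] at this
    exact h21.trans this
  set n := N / (q + 1) with hndef
  have hn : (q + 1) * n = N := Nat.mul_div_cancel' hdvdN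
  set a := i * (q + 1) with ha
  have hdvdA : (q + 1) ∣ a := ⟨i, by rw [ha]; ring⟩
  -- upper bound : a + q ≤ q^(s+1)
  have hdvd_su : (q + 1) ∣ q ^ (s + 1) + 1 := by
    obtain ⟨w, hw⟩ := hdvd_s
    refine ⟨q * w + 1, ?_⟩
    have h1 : q ^ (s + 1) = q * q ^ s := by rw [pow_succ]; ring
    have h2 : q ^ s = (q + 1) * w + 1 := by omega
    rw [h1, h2]; ring
  have hau : a + q ≤ q ^ (s + 1) := by
    have h1 : i + 1 ≤ (q ^ (s + 1) + 1) / (q + 1) := hiu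
    have h2 : (i + 1) * (q + 1) ≤ q ^ (s + 1) + 1 :=
      (Nat.le_div_iff_mul_le (by omega)).mp h1
    have h3 : (i + 1) * (q + 1) = a + q + 1 := by rw [ha]; ring
    omega
  have haN : a < N := by
    have h1 : q ^ (s + 1) * q ≤ q ^ (2 * s) := by
      rw [← pow_succ]; exact Nat.pow_le_pow_right (by omega) (by omega)
    have h2 : q ^ (s + 1) * 2 ≤ q ^ (s + 1) * q := Nat.mul_le_mul_left _ hq1
    omega
  have hi_lt_n : i < n := by
    have h1 : (q + 1) * i < (q + 1) * n := by
      rw [hn]; calc (q + 1) * i = a := by rw [ha]; ring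
      _ < N := haN
    exact lt_of_mul_lt_mul_left h1 (by omega)
  -- bridge between mod n and mod N
  have bridge : ∀ j, (q + 1) * (i * q ^ j % n) = a * q ^ j % N := by
    intro j
    conv_rhs => rw [← hn]
    rw [show a * q ^ j = (q + 1) * (i * q ^ j) by rw [ha]; ring, Nat.mul_mod_mul_left]
  have bridge2 : ∀ j, (i * q ^ j % n < i ↔ a * q ^ j % N < a) := by
    intro j
    rw [← bridge j, ha, mul_comm i (q + 1)]
    constructor
    · intro h; exact mul_lt_mul_of_pos_left h (by omega)
    · intro h; exact lt_of_mul_lt_mul_left h (by omega)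
  clear_value N n a
  -- digits of a in base q^s
  set c := a / q ^ s with hcdef
  set d := a % q ^ s with hddef
  have hcd : q ^ s * c + d = a := Nat.div_add_mod a (q ^ s)
  have hdlt : d < q ^ s := Nat.mod_lt _ (by omega)
  clear_value c d
  have hclt : c < q := by
    rw [hcdef]
    rw [Nat.div_lt_iff_lt_mul (by omega : 0 < q ^ s)]
    calc a < q ^ (s + 1) := by omega
    _ = q * q ^ s := by rw [pow_succ]; ring
  have hqd : ¬ q ∣ d := by
    intro hdq
    apply hqi
    have h1 : q ∣ q ^ s * c := Dvd.dvd.mul_right (dvd_pow_self q (by omega)) c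
    have h2 : q ∣ a := by
      have := Nat.dvd_add h1 hdq
      rwa [hcd] at this
    have hcop : Nat.Coprime q (q + 1) := by simp
    exact hcop.dvd_of_dvd_mul_right (ha ▸ h2)
  have hcd_dvd : (q + 1) ∣ c + d := by
    have h1 : (q + 1) ∣ c * (q ^ s - 1) := Dvd.dvd.mul_left hdvd_s c
    have e1 : c * (q ^ s - 1) = q ^ s * c - c := by
      rw [Nat.mul_sub, mul_one, mul_comm]
    have h2 : c * (q ^ s - 1) + (c + d) = a := by
      have h3 : c ≤ q ^ s * c := Nat.le_mul_of_pos_left c (by omega)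
      omega
    exact (Nat.dvd_add_right h1).mp (h2 ▸ hdvdA)
  -- key computation for j = s
  have L1 : a * q ^ s % N = d * q ^ s + c := by
    apply modN_eq (k := c)
    · calc a * q ^ s = (q ^ s * c + d) * q ^ s := by rw [hcd]
      _ = c * (q ^ s * q ^ s) + d * q ^ s := by ring
      _ = c * (N + 1) + d * q ^ s := by rw [hss]
      _ = (d * q ^ s + c) + c * N := by ring
    · have h4 : (d + 1) * q ^ s ≤ q ^ s * q ^ s := Nat.mul_le_mul_right _ (by omega)
      have h5 : (d + 1) * q ^ s = d * q ^ s + q ^ s := by ring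
      omega
  -- key computation for j = s + r, 1 ≤ r ≤ s - 1
  have L2 : ∀ r, 1 ≤ r → r ≤ s - 1 → a < a * q ^ (s + r) % N := by
    intro r hr1 hr2
    have hes : (s - r) + r = s := by omega
    set e := s - r with hedef
    have he1 : 1 ≤ e := by omega
    have hqe1 : 0 < q ^ e := Nat.pow_pos (by omega)
    set d1 := d / q ^ e with hd1def
    set d0 := d % q ^ e with hd0def
    have hdd : q ^ e * d1 + d0 = d := Nat.div_add_mod d (q ^ e)
    have hd0lt : d0 < q ^ e := Nat.mod_lt _ hqe1
    have hd1lt : d1 < q ^ r := by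
      rw [hd1def, Nat.div_lt_iff_lt_mul hqe1]
      calc d < q ^ s := hdlt
      _ = q ^ r * q ^ e := by rw [← pow_add, show r + e = s by omega]
    have hd0pos : 1 ≤ d0 := by
      rcases Nat.eq_zero_or_pos d0 with h0 | h0
      · exfalso
        apply hqd
        have h1 : q ^ e ∣ d := Nat.dvd_of_mod_eq_zero h0
        exact (dvd_pow_self q (by omega : e ≠ 0)).trans h1
      · exact h0
    clear_value e d1 d0
    have p1 : q ^ s * q ^ (s + r) = (N + 1) * q ^ r := by
      rw [← pow_add, show s + (s + r) = 2 * s + r by ring, pow_add, ← hN1]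
    have p2 : q ^ e * q ^ (s + r) = N + 1 := by
      rw [← pow_add, show e + (s + r) = 2 * s by omega, ← hN1]
    have hmod : a * q ^ (s + r) % N = d0 * q ^ (s + r) + (c * q ^ r + d1) := by
      apply modN_eq (k := c * q ^ r + d1)
      · calc a * q ^ (s + r) = (q ^ s * c + (q ^ e * d1 + d0)) * q ^ (s + r) := by
              rw [hdd, hcd]
        _ = c * (q ^ s * q ^ (s + r)) + d1 * (q ^ e * q ^ (s + r)) + d0 * q ^ (s + r) := by
              ring
        _ = c * ((N + 1) * q ^ r) + d1 * (N + 1) + d0 * q ^ (s + r) := by rw [p1, p2]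
        _ = (d0 * q ^ (s + r) + (c * q ^ r + d1)) + (c * q ^ r + d1) * N := by ring
      · have b1 : (d0 + 1) * q ^ (s + r) ≤ N + 1 := by
          calc (d0 + 1) * q ^ (s + r) ≤ q ^ e * q ^ (s + r) :=
                Nat.mul_le_mul_right _ (by omega)
          _ = N + 1 := p2
        have b1' : (d0 + 1) * q ^ (s + r) = d0 * q ^ (s + r) + q ^ (s + r) := by ring
        have b2 : (c + 1) * q ^ r ≤ q * q ^ r := Nat.mul_le_mul_right _ (by omega)
        have b2' : (c + 1) * q ^ r = c * q ^ r + q ^ r := by ring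
        have b3 : q * q ^ r < q ^ (s + r) := by
          rw [← pow_succ']
          exact Nat.pow_lt_pow_right (by omega) (by omega)
        linarith
    rw [hmod]
    have h1 : q ^ (s + 1) ≤ q ^ (s + r) := Nat.pow_le_pow_right (by omega) (by omega)
    have h2 : q ^ (s + r) ≤ d0 * q ^ (s + r) := by
      calc q ^ (s + r) = 1 * q ^ (s + r) := by ring
      _ ≤ d0 * q ^ (s + r) := Nat.mul_le_mul_right _ hd0pos
    omega
  constructor
  · -- forward direction
    intro hNL
    have hB : ∃ j, i * q ^ j % n < i := by
      by_contra hA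
      push_neg at hA
      exact hNL ⟨hi_lt_n, hA⟩
    obtain ⟨j, hj⟩ := hB
    have hq2s : q ^ (2 * s) ≡ 1 [MOD n] := by
      have hnN : n ∣ N := ⟨q + 1, by rw [← hn]; ring⟩
      have h1 : n ∣ q ^ (2 * s) - 1 := by
        have h2 : q ^ (2 * s) - 1 = N := by omega
        rwa [h2]
      exact ((Nat.modEq_iff_dvd' (by omega : 1 ≤ q ^ (2 * s))).mpr h1).symm
    have hred : i * q ^ j % n = i * q ^ (j % (2 * s)) % n := by
      have hpow : q ^ j ≡ q ^ (j % (2 * s)) [MOD n] := by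
        conv_lhs => rw [← Nat.div_add_mod j (2 * s)]
        rw [pow_add, pow_mul]
        calc (q ^ (2 * s)) ^ (j / (2 * s)) * q ^ (j % (2 * s))
            ≡ 1 ^ (j / (2 * s)) * q ^ (j % (2 * s)) [MOD n] :=
              Nat.ModEq.mul_right _ (Nat.ModEq.pow _ hq2s)
        _ = q ^ (j % (2 * s)) := by rw [one_pow, one_mul]
      exact Nat.ModEq.mul_left i hpow
    rw [hred] at hj
    set j' := j % (2 * s) with hj'def
    have hj'lt : j' < 2 * s := Nat.mod_lt _ (by omega)
    have key : a * q ^ j' % N < a := (bridge2 j').mp hj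
    clear_value j'
    by_cases hjs : j' = s
    · -- the only case producing an actual smaller element
      rw [hjs, L1] at key
      have hdc : d < c := by
        by_contra h
        push_neg at h  -- c ≤ d
        obtain ⟨w, hw⟩ := Nat.exists_eq_add_of_le h
        have h1 : w ≤ w * q ^ s := Nat.le_mul_of_pos_right w (by omega)
        have h2 : d * q ^ s = c * q ^ s + w * q ^ s := by rw [hw]; ring
        have h3 : q ^ s * c = c * q ^ s := by ring
        omega
      obtain ⟨m, hm⟩ := hcd_dvd
      have hm1 : 1 ≤ m := by
        rcases Nat.eq_zero_or_pos m with h0 | h0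
        · exfalso; rw [h0, mul_zero] at hm; omega
        · exact h0
      have hm2 : m < 2 := by
        by_contra h
        push_neg at h
        have h1 : (q + 1) * 2 ≤ (q + 1) * m := Nat.mul_le_mul_left _ h
        omega
      have hcd9 : c + d = q + 1 := by
        have hm3 : m = 1 := by omega
        rw [hm3, mul_one] at hm
        omega
      refine ⟨q - c, by omega, by omega, ?_⟩
      rw [show q - (q - c) = c by omega, show q - c + 1 = d by omega]
      have h3 : q ^ s * c = c * q ^ s := by ring
      omega
    · exfalso
      rcases Nat.lt_or_ge j' s with hlt | hge
      · -- j' < s : no wrap-around, value only grows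
        have hsmall : a * q ^ j' < N := by
          have e1 : q ^ j' ≤ q ^ (s - 1) := Nat.pow_le_pow_right (by omega) (by omega)
          have e2 : (a + q) * q ^ j' ≤ q ^ (s + 1) * q ^ (s - 1) :=
            Nat.mul_le_mul hau e1
          have e3 : q ^ (s + 1) * q ^ (s - 1) = N + 1 := by
            rw [← pow_add, show s + 1 + (s - 1) = 2 * s by omega, ← hN1]
          have e4 : (a + q) * q ^ j' = a * q ^ j' + q * q ^ j' := by ring
          have e5 : q ≤ q * q ^ j' := Nat.le_mul_of_pos_right q (Nat.pow_pos (by omega))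
          omega
        rw [Nat.mod_eq_of_lt hsmall] at key
        have : a * 1 ≤ a * q ^ j' :=
          Nat.mul_le_mul_left _ (Nat.one_le_pow _ _ (by omega))
        omega
      · -- s < j' < 2s
        have hr1 : 1 ≤ j' - s := by omega
        have h := L2 (j' - s) hr1 (by omega)
        rw [show s + (j' - s) = j' by omega] at h
        omega
  · -- backward direction
    rintro ⟨t, ht1, ht2, heq⟩ hCL
    have ht3 : 2 * t + 2 ≤ q := by omega
    have ha' : a = (q - t) * q ^ s + (t + 1) := heq
    have Lt : a * q ^ s % N = (t + 1) * q ^ s + (q - t) := by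
      apply modN_eq (k := q - t)
      · calc a * q ^ s = ((q - t) * q ^ s + (t + 1)) * q ^ s := by rw [ha']
        _ = (q - t) * (q ^ s * q ^ s) + (t + 1) * q ^ s := by ring
        _ = (q - t) * (N + 1) + (t + 1) * q ^ s := by rw [hss]
        _ = ((t + 1) * q ^ s + (q - t)) + (q - t) * N := by ring
      · have b1 : (t + 2) * q ^ s ≤ q * q ^ s := Nat.mul_le_mul_right _ (by omega)
        have b1' : (t + 2) * q ^ s = (t + 1) * q ^ s + q ^ s := by ring
        have b2 : q * q ^ s = q ^ (s + 1) := by rw [pow_succ]; ring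
        have b3 : q ^ (s + 1) * q ≤ q ^ (2 * s) := by
          rw [← pow_succ]; exact Nat.pow_le_pow_right (by omega) (by omega)
        have b4 : q ^ (s + 1) * 2 ≤ q ^ (s + 1) * q := Nat.mul_le_mul_left _ hq1
        omega
    have hlt2 : a * q ^ s % N < a := by
      rw [Lt, ha']
      have h1 : t + 1 < q - t := by omega
      have h2 : (t + 2) * q ^ s ≤ (q - t) * q ^ s := Nat.mul_le_mul_right _ (by omega)
      have h3 : (t + 2) * q ^ s = (t + 1) * q ^ s + q ^ s := by ring
      omega
    have hfin : i * q ^ s % n < i := (bridge2 s).mpr hlt2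
    exact absurd (hCL.2 s) (not_le.2 hfin)
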